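/- With R distributed as the truncated nearest-neighbor distance f_R(r) = 2πλ r e^{−πλ r²}/(1 − e^{−πλ R_M²}) on [0, R_M], and the uplink transmit power P_u = ρ R^η (channel inversion power control), the fractional moment satisfies E[P_u^{2/η}] = ρ^{2/η} γ(2, πλ R_M²) / (πλ (1 − e^{−πλ R_M²})), where γ is the lower incomplete gamma function. -/

import Mathlib

open MeasureTheory Real Set

/-- Lower incomplete gamma function `γ(s,x) = ∫₀^x t^{s−1} e^{−t} dt`. -/
noncomputable def lowerIncGamma (s x : ℝ) : ℝ := ∫ t in (0:ℝ)..x, t ^ (s - 1) * Real.exp (-t)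

lemma intA (x : ℝ) : ∫ t in (0:ℝ)..x, t * Real.exp (-t)
    = 1 - Real.exp (-x) * (1 + x) := by
  have key : ∀ t : ℝ, HasDerivAt (fun t => -(t + 1) * Real.exp (-t)) (t * Real.exp (-t)) t := by
    intro t
    have h1 : HasDerivAt (fun t : ℝ => Real.exp (-t)) (-Real.exp (-t)) t := by
      exact ((Real.hasDerivAt_exp (-t)).comp t (hasDerivAt_neg t)).congr_deriv (by ring)
    have h2 : HasDerivAt (fun t : ℝ => -(t + 1)) (-1) t := by
      exact ((hasDerivAt_id t).add_const (1:ℝ)).neg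
    have := h2.mul h1
    refine this.congr_deriv ?_
    ring
  rw [intervalIntegral.integral_eq_sub_of_hasDerivAt (fun t _ => key t)
    ((continuous_id.mul (Real.continuous_exp.comp continuous_neg)).intervalIntegrable 0 x)]
  simp
  ring

lemma lig2 (x : ℝ) : lowerIncGamma 2 x = 1 - Real.exp (-x) * (1 + x) := by
  rw [lowerIncGamma, ← intA]
  apply intervalIntegral.integral_congr
  intro t _
  norm_num

lemma intB (c b : ℝ) (hc : 0 < c) :
    ∫ r in (0:ℝ)..b, r ^ 2 * (2 * c * r * Real.exp (-(c * r ^ 2)))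
      = 1 / c - (b ^ 2 + 1 / c) * Real.exp (-(c * b ^ 2)) := by
  have key : ∀ r : ℝ, HasDerivAt (fun r => -(r ^ 2 + 1 / c) * Real.exp (-(c * r ^ 2)))
      (r ^ 2 * (2 * c * r * Real.exp (-(c * r ^ 2)))) r := by
    intro r
    have h1 : HasDerivAt (fun r : ℝ => Real.exp (-(c * r ^ 2))) ((-(c * (2 * r))) * Real.exp (-(c * r ^ 2))) r := by
      have hp : HasDerivAt (fun r : ℝ => -(c * r ^ 2)) (-(c * (2 * r))) r := by
        exact (((hasDerivAt_pow 2 r).const_mul c).neg).congr_deriv (by norm_num)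
      exact ((Real.hasDerivAt_exp (-(c * r ^ 2))).comp r hp).congr_deriv (mul_comm _ _)
    have h2 : HasDerivAt (fun r : ℝ => -(r ^ 2 + 1 / c)) (-(2 * r)) r := by
      exact (((hasDerivAt_pow 2 r).add_const (1 / c)).neg).congr_deriv (by norm_num)
    have := h2.mul h1
    refine this.congr_deriv ?_
    field_simp
    ring
  rw [intervalIntegral.integral_eq_sub_of_hasDerivAt (fun r _ => key r) (by apply Continuous.intervalIntegrable; continuity)]
  simp
  field_simp
  ring

/-- Fractional moment of the uplink transmit power `P_u = ρ R^η` under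
truncated channel inversion power control, where `R` has the truncated
nearest-neighbor density `f_R(r) = 2πλ r e^{−πλr²}/(1 − e^{−πλ R_M²})` on `[0, R_M]`:
`E[P_u^{2/η}] = ρ^{2/η} γ(2, πλ R_M²) / (πλ (1 − e^{−πλ R_M²}))`. -/
theorem uplink_power_fractional_moment
    (l R_M ρ η : ℝ) (hl : 0 < l) (hRM : 0 < R_M) (hρ : 0 < ρ) (hη : 2 < η) :
    ∫ r in (0:ℝ)..R_M,
        (ρ * r ^ η) ^ (2 / η) *
          (2 * π * l * r * Real.exp (-(π * l * r ^ 2)) / (1 - Real.exp (-(π * l * R_M ^ 2))))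
      = ρ ^ (2 / η) * lowerIncGamma 2 (π * l * R_M ^ 2)
          / (π * l * (1 - Real.exp (-(π * l * R_M ^ 2)))) := by
  have hπl : 0 < π * l := mul_pos Real.pi_pos hl
  have hx : 0 < π * l * R_M ^ 2 := mul_pos hπl (by positivity)
  have hE : Real.exp (-(π * l * R_M ^ 2)) < 1 := by
    rw [Real.exp_lt_one_iff]; linarith
  have hden : (1 : ℝ) - Real.exp (-(π * l * R_M ^ 2)) ≠ 0 := by linarith
  have hηne : η ≠ 0 := by linarith
  have hcongr : ∫ r in (0:ℝ)..R_M,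
        (ρ * r ^ η) ^ (2 / η) *
          (2 * π * l * r * Real.exp (-(π * l * r ^ 2)) / (1 - Real.exp (-(π * l * R_M ^ 2))))
      = ∫ r in (0:ℝ)..R_M, (ρ ^ (2 / η) / (1 - Real.exp (-(π * l * R_M ^ 2)))) *
          (r ^ 2 * (2 * (π * l) * r * Real.exp (-(π * l * r ^ 2)))) := by
    apply intervalIntegral.integral_congr
    intro r hr
    rw [Set.uIcc_of_le hRM.le] at hr
    have hr0 : 0 ≤ r := hr.1
    have : (ρ * r ^ η) ^ (2 / η) = ρ ^ (2 / η) * r ^ 2 := by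
      rw [Real.mul_rpow hρ.le (Real.rpow_nonneg hr0 η), ← Real.rpow_natCast r 2,
        ← Real.rpow_mul hr0]
      congr 1
      push_cast
      field_simp
    dsimp only
    rw [this]
    ring
  rw [hcongr, intervalIntegral.integral_const_mul, intB (π * l) R_M hπl,
    lig2 (π * l * R_M ^ 2)]
  field_simp
  ring
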